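/- In the quotient of H_3(q) by the ideal generated by e_1 e_2 e_1 - e_1 (where e_j = q^{-1/2}(g_j+1)), the image of the symmetrizer C_3 = (1/[3]_q!)·Σ_{w ∈ S_3} g_w is zero. -/

import Mathlib

noncomputable section

/-- The defining relations of the Hecke algebra `H₃(q)` on the free algebra on
two generators `g₁ = ι 0`, `g₂ = ι 1`. -/
inductive HeckeRel3 (q : ℝ) :
    FreeAlgebra ℂ (Fin 2) → FreeAlgebra ℂ (Fin 2) → Prop
  | sq (i : Fin 2) : HeckeRel3 q (FreeAlgebra.ι ℂ i * FreeAlgebra.ι ℂ i)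
      (((q : ℂ) - 1) • FreeAlgebra.ι ℂ i + (q : ℂ) • 1)
  | braid : HeckeRel3 q
      (FreeAlgebra.ι ℂ 0 * FreeAlgebra.ι ℂ 1 * FreeAlgebra.ι ℂ 0)
      (FreeAlgebra.ι ℂ 1 * FreeAlgebra.ι ℂ 0 * FreeAlgebra.ι ℂ 1)

/-- The Hecke algebra `H₃(q)`. -/
abbrev H3 (q : ℝ) := RingQuot (HeckeRel3 q)

/-- The generators `g₁, g₂` of `H₃(q)`. -/
def G (q : ℝ) (i : Fin 2) : H3 q :=
  RingQuot.mkAlgHom ℂ (HeckeRel3 q) (FreeAlgebra.ι ℂ i)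

/-- The Temperley-Lieb generators `e_j = q^{-1/2}(g_j + 1)` of `H₃(q)`. -/
def E (q : ℝ) (i : Fin 2) : H3 q := ((Real.sqrt q : ℂ))⁻¹ • (G q i + 1)

/-- The Temperley-Lieb relation `e₁e₂e₁ = e₁` imposed on `H₃(q)`; the quotient
`RingQuot (TLRel3 q)` is `H₃(q)` modulo the two-sided ideal generated by
`e₁e₂e₁ - e₁`. -/
inductive TLRel3 (q : ℝ) : H3 q → H3 q → Prop
  | rel : TLRel3 q (E q 0 * E q 1 * E q 0) (E q 0)

/-- The symmetrizer `C₃ = (1/[3]_q!) Σ_{w ∈ S₃} g_w`. -/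
def C3 (q : ℝ) : H3 q :=
  ((((1 + q) * (1 + q + q ^ 2) : ℝ) : ℂ))⁻¹ •
    (1 + G q 0 + G q 1 + G q 0 * G q 1 + G q 1 * G q 0 + G q 0 * G q 1 * G q 0)

/-- In the Temperley-Lieb quotient `H₃(q)/⟨e₁e₂e₁ - e₁⟩`, the image of the
symmetrizer `C₃` is zero. -/
theorem stmt19 (q : ℝ) (hq : 0 < q) :
    RingQuot.mkAlgHom ℂ (TLRel3 q) (C3 q) = 0 := by
  set s : ℂ := ((Real.sqrt q : ℝ) : ℂ) with hs_def
  have hs2 : s ^ 2 = (q : ℂ) := by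
    rw [hs_def, ← Complex.ofReal_pow, Real.sq_sqrt hq.le]
  have hs0 : s ≠ 0 := by
    simpa [hs_def] using ne_of_gt (Real.sqrt_pos.mpr hq)
  have hD : ((((1 + q) * (1 + q + q ^ 2) : ℝ)) : ℂ) ≠ 0 := by
    exact_mod_cast (by positivity : (0:ℝ) < (1 + q) * (1 + q + q ^ 2)).ne'
  have ha : G q 0 * G q 0 = ((q:ℂ) - 1) • G q 0 + (q:ℂ) • 1 := by
    have h := RingQuot.mkAlgHom_rel ℂ (HeckeRel3.sq (q := q) 0)
    simpa only [G, map_mul, map_add, map_smul, map_one] using h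
  have key : ((((1 + q) * (1 + q + q ^ 2) : ℝ)) : ℂ) • C3 q =
      s ^ 3 • (E q 0 * E q 1 * E q 0) - (s * (q:ℂ)) • E q 0 := by
    rw [C3, E, E]
    simp only [smul_add, smul_smul, mul_add, add_mul, smul_mul_assoc,
      mul_smul_comm, mul_one, one_mul, smul_sub, mul_assoc]
    rw [show G q 0 * G q 0 = ((q:ℂ) - 1) • G q 0 + (q:ℂ) • 1 from ha]
    simp only [smul_add, smul_smul, mul_one]
    have hD6 : (1 : ℂ) + s ^ 2 * 2 + s ^ 4 * 2 + s ^ 6 ≠ 0 := by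
      have he : (1 : ℂ) + s ^ 2 * 2 + s ^ 4 * 2 + s ^ 6
          = ((((1 + q) * (1 + q + q ^ 2) : ℝ)) : ℂ) := by
        rw [show s ^ 4 = (s ^ 2) ^ 2 from by ring,
          show s ^ 6 = (s ^ 2) ^ 3 from by ring, hs2]
        push_cast; ring
      rw [he]; exact hD
    match_scalars <;>
      (rw [← hs_def, ← hs2]
       have hD7 : (1 + s ^ 2 + (s ^ 2 + s ^ 2 * s ^ 2) + ((s ^ 2) ^ 2 + s ^ 2 * (s ^ 2) ^ 2)) ≠ 0 := by
         convert hD6 using 1; ring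
       rw [mul_inv_cancel₀ hD7]
       field_simp
       all_goals ring)
  have h0 : ((((1 + q) * (1 + q + q ^ 2) : ℝ)) : ℂ) •
      RingQuot.mkAlgHom ℂ (TLRel3 q) (C3 q) = 0 := by
    have hs3 : s ^ 3 = s * (q:ℂ) := by rw [← hs2]; ring
    rw [← map_smul, key, map_sub, map_smul, map_smul,
      RingQuot.mkAlgHom_rel ℂ (TLRel3.rel (q := q)), hs3, sub_self]
  have h0' := congrArg (fun x => ((((1 + q) * (1 + q + q ^ 2) : ℝ)) : ℂ)⁻¹ • x) h0
  simpa only [smul_smul, inv_mul_cancel₀ hD, one_smul, smul_zero] using h0'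


end
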